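/- The cone S(M) is rank-one generated if and only if for every nonzero X ∈ S(M) there exists a nonzero vector x in range(X) with |xᵀMx| ≤ ⟨M,X⟩ for all M ∈ M. -/

import Mathlib

open Matrix Set

noncomputable section

/-- The set of rank-one (outer product) matrices `x xᵀ`. -/
def RankOneSet (n : ℕ) : Set (Matrix (Fin n) (Fin n) ℝ) :=
  {X | ∃ x : Fin n → ℝ, X = vecMulVec x x}

/-- A set of PSD matrices is rank-one generated if it equals the convex hull of its
rank-one members. -/
def IsROG {n : ℕ} (S : Set (Matrix (Fin n) (Fin n) ℝ)) : Prop :=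
  S = convexHull ℝ (S ∩ RankOneSet n)

/-- `ℝ₊X` is an extreme ray of `S`: `X ∈ S`, `X ≠ 0`, and whenever `X = (Y+Z)/2` with
`Y, Z ∈ S`, both `Y` and `Z` lie on the ray `ℝ₊X`. -/
def IsExtremeRay' {n : ℕ} (S : Set (Matrix (Fin n) (Fin n) ℝ))
    (X : Matrix (Fin n) (Fin n) ℝ) : Prop :=
  X ∈ S ∧ X ≠ 0 ∧ ∀ Y ∈ S, ∀ Z ∈ S, X = (1/2 : ℝ) • (Y + Z) →
    (∃ α : ℝ, 0 ≤ α ∧ Y = α • X) ∧ (∃ β : ℝ, 0 ≤ β ∧ Z = β • X)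

/-- `S(𝓜) = {X ⪰ 0 : ⟨N, X⟩ ≥ 0 ∀ N ∈ 𝓜}` with the trace inner product. -/
def SCone {n : ℕ} (𝓜 : Set (Matrix (Fin n) (Fin n) ℝ)) : Set (Matrix (Fin n) (Fin n) ℝ) :=
  {X | X.PosSemidef ∧ ∀ N ∈ 𝓜, 0 ≤ (N * X).trace}

/-- `T(𝓜) = {X ⪰ 0 : ⟨N, X⟩ = 0 ∀ N ∈ 𝓜}` with the trace inner product. -/
def TCone {n : ℕ} (𝓜 : Set (Matrix (Fin n) (Fin n) ℝ)) : Set (Matrix (Fin n) (Fin n) ℝ) :=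
  {X | X.PosSemidef ∧ ∀ N ∈ 𝓜, (N * X).trace = 0}

section Helpers

variable {n : ℕ} {𝓜 : Set (Matrix (Fin n) (Fin n) ℝ)}

lemma trace_mul_vecMulVec (N : Matrix (Fin n) (Fin n) ℝ) (x : Fin n → ℝ) :
    (N * vecMulVec x x).trace = x ⬝ᵥ N.mulVec x := by
  simp only [Matrix.trace, Matrix.diag, Matrix.mul_apply, vecMulVec_apply, dotProduct,
    Matrix.mulVec, Finset.mul_sum]
  exact Finset.sum_congr rfl fun i _ => Finset.sum_congr rfl fun j _ => by ring

lemma vecMulVec_mulVec' (x z : Fin n → ℝ) :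
    (vecMulVec x x).mulVec z = (x ⬝ᵥ z) • x := by
  funext i
  simp [Matrix.mulVec, vecMulVec_apply, dotProduct, Finset.mul_sum, mul_comm, mul_assoc]
  exact Finset.sum_congr rfl fun j _ => by ring

lemma quad_vecMulVec (x z : Fin n → ℝ) :
    z ⬝ᵥ (vecMulVec x x).mulVec z = (x ⬝ᵥ z) ^ 2 := by
  rw [vecMulVec_mulVec', dotProduct_smul, smul_eq_mul, dotProduct_comm]
  ring

lemma trace_vecMulVec (x : Fin n → ℝ) : (vecMulVec x x).trace = x ⬝ᵥ x := by
  simp [Matrix.trace, Matrix.diag, vecMulVec_apply, dotProduct]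

lemma posSemidef_vecMulVec (x : Fin n → ℝ) : (vecMulVec x x).PosSemidef := by
  refine .of_dotProduct_mulVec_nonneg ?_ ?_
  · ext i j; simp [vecMulVec_apply, mul_comm]
  · intro z
    simp only [star_trivial, quad_vecMulVec]
    positivity

lemma smul_vecMulVec (c : ℝ) (hc : 0 ≤ c) (x : Fin n → ℝ) :
    c • vecMulVec x x = vecMulVec (Real.sqrt c • x) (Real.sqrt c • x) := by
  ext i j
  simp only [vecMulVec_apply, Pi.smul_apply, smul_eq_mul, Matrix.smul_apply]
  rw [show Real.sqrt c * x i * (Real.sqrt c * x j)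
      = (Real.sqrt c * Real.sqrt c) * (x i * x j) by ring, Real.mul_self_sqrt hc]

lemma psd_smul {X : Matrix (Fin n) (Fin n) ℝ} (hX : X.PosSemidef) {c : ℝ} (hc : 0 ≤ c) :
    (c • X).PosSemidef := by
  refine .of_dotProduct_mulVec_nonneg ?_ fun z => ?_
  · rw [Matrix.IsHermitian, conjTranspose_smul, hX.1]; simp
  · rw [smul_mulVec, dotProduct_smul, smul_eq_mul]
    exact mul_nonneg hc (by simpa using hX.dotProduct_mulVec_nonneg z)

lemma psd_diag_nonneg {X : Matrix (Fin n) (Fin n) ℝ} (hX : X.PosSemidef) (i : Fin n) :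
    0 ≤ X i i := by
  have := hX.dotProduct_mulVec_nonneg (Pi.single i 1)
  simpa [dotProduct, Matrix.mulVec, Pi.single_apply] using this

lemma psd_trace_nonneg {X : Matrix (Fin n) (Fin n) ℝ} (hX : X.PosSemidef) : 0 ≤ X.trace :=
  Finset.sum_nonneg fun i _ => psd_diag_nonneg hX i

lemma psd_trace_eq_zero {X : Matrix (Fin n) (Fin n) ℝ} (hX : X.PosSemidef)
    (h : X.trace = 0) : X = 0 := by
  have hdiag : ∀ i, X i i = 0 := by
    intro i
    have hsum : ∑ i, X i i = 0 := h
    have := Finset.sum_eq_zero_iff_of_nonneg (fun i _ => psd_diag_nonneg hX i) |>.mp hsum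
    exact this i (Finset.mem_univ i)
  ext i j
  have h2 : X.mulVec (Pi.single j 1) = 0 := by
    rw [← hX.dotProduct_mulVec_zero_iff]
    simpa [dotProduct, Matrix.mulVec, Pi.single_apply] using hdiag j
  have := congrFun h2 i
  simpa [Matrix.mulVec, dotProduct, Pi.single_apply] using this

lemma psd_cauchy_schwarz {X : Matrix (Fin n) (Fin n) ℝ} (hX : X.PosSemidef)
    (u v : Fin n → ℝ) :
    (u ⬝ᵥ X.mulVec v) ^ 2 ≤ (u ⬝ᵥ X.mulVec u) * (v ⬝ᵥ X.mulVec v) := by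
  open scoped MatrixOrder in
  obtain ⟨B, rfl⟩ := CStarAlgebra.nonneg_iff_eq_star_mul_self.mp hX.nonneg
  rw [star_eq_conjTranspose]
  have key : ∀ a b : Fin n → ℝ, a ⬝ᵥ (Bᴴ * B).mulVec b = (B.mulVec a) ⬝ᵥ (B.mulVec b) := by
    intro a b
    rw [← Matrix.mulVec_mulVec, Matrix.dotProduct_mulVec a, Matrix.vecMul_conjTranspose]
    simp
  rw [key, key, key]
  have := Finset.sum_mul_sq_le_sq_mul_sq Finset.univ (B.mulVec u) (B.mulVec v)
  simpa [dotProduct, pow_two] using this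

lemma mem_range_of_ker_orth {X : Matrix (Fin n) (Fin n) ℝ} (hX : X.IsHermitian)
    (v : Fin n → ℝ) (hv : ∀ z : Fin n → ℝ, X.mulVec z = 0 → v ⬝ᵥ z = 0) :
    ∃ y : Fin n → ℝ, X.mulVec y = v := by
  classical
  let T : EuclideanSpace ℝ (Fin n) →ₗ[ℝ] EuclideanSpace ℝ (Fin n) := Matrix.toEuclideanLin X
  have hT : ∀ u : EuclideanSpace ℝ (Fin n), (T u).ofLp = X.mulVec u.ofLp := fun u => rfl
  have hinner : ∀ a b : EuclideanSpace ℝ (Fin n), (inner ℝ a b : ℝ) = a.ofLp ⬝ᵥ b.ofLp := by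
    intro a b
    rw [EuclideanSpace.inner_eq_star_dotProduct, star_trivial, dotProduct_comm]
  have hsymm : ∀ a b : EuclideanSpace ℝ (Fin n), (inner ℝ (T a) b : ℝ) = inner ℝ a (T b) := by
    intro a b
    rw [hinner, hinner, hT, hT]
    rw [Matrix.dotProduct_mulVec, ← Matrix.vecMul_transpose]
    congr 1
    rw [show Xᵀ = X from hX]
  have hle : LinearMap.range T ≤ (LinearMap.ker T)ᗮ := by
    rintro _ ⟨w, rfl⟩
    intro z hz
    rw [← hsymm]
    have hz' : T z = 0 := hz
    rw [real_inner_comm, hz', hinner]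
    simp
  have heq : LinearMap.range T = (LinearMap.ker T)ᗮ := by
    apply Submodule.eq_of_le_of_finrank_le hle
    have h1 : Module.finrank ℝ (LinearMap.ker T) + Module.finrank ℝ ((LinearMap.ker T)ᗮ)
        = Module.finrank ℝ (EuclideanSpace ℝ (Fin n)) :=
      Submodule.finrank_add_finrank_orthogonal _
    have h2 := LinearMap.finrank_range_add_finrank_ker T
    omega
  have hvmem : (WithLp.toLp 2 v : EuclideanSpace ℝ (Fin n)) ∈ (LinearMap.ker T)ᗮ := by
    intro z hz
    have hz' : X.mulVec z.ofLp = 0 := congrArg WithLp.ofLp (hz : T z = 0)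
    rw [hinner, dotProduct_comm]
    exact hv z.ofLp hz'
  rw [← heq] at hvmem
  obtain ⟨y, hy⟩ := hvmem
  exact ⟨y.ofLp, congrArg WithLp.ofLp hy⟩

lemma sCone_smul_mem {X : Matrix (Fin n) (Fin n) ℝ} (hX : X ∈ SCone 𝓜) {c : ℝ} (hc : 0 ≤ c) :
    c • X ∈ SCone 𝓜 := by
  refine ⟨psd_smul hX.1 hc, fun N hN => ?_⟩
  rw [Matrix.mul_smul, trace_smul, smul_eq_mul]
  exact mul_nonneg hc (hX.2 N hN)

lemma sCone_add_mem {X Y : Matrix (Fin n) (Fin n) ℝ} (hX : X ∈ SCone 𝓜) (hY : Y ∈ SCone 𝓜) :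
    X + Y ∈ SCone 𝓜 := by
  refine ⟨hX.1.add hY.1, fun N hN => ?_⟩
  rw [Matrix.mul_add, trace_add]
  exact add_nonneg (hX.2 N hN) (hY.2 N hN)

lemma sCone_convex : Convex ℝ (SCone 𝓜) := fun _ hX _ hY a b ha hb _ =>
  sCone_add_mem (sCone_smul_mem hX ha) (sCone_smul_mem hY hb)

lemma sCone_isClosed : IsClosed (SCone 𝓜) := by
  have : SCone 𝓜 = ({X : Matrix (Fin n) (Fin n) ℝ | Xᴴ = X} ∩
      ⋂ v : Fin n → ℝ, {X | 0 ≤ v ⬝ᵥ X.mulVec v}) ∩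
      ⋂ N ∈ 𝓜, {X | 0 ≤ (N * X).trace} := by
    ext X
    constructor
    · rintro ⟨hP, h3⟩
      exact ⟨⟨hP.1, mem_iInter.mpr fun v => by simpa using hP.dotProduct_mulVec_nonneg v⟩,
        mem_iInter₂.mpr fun N hN => h3 N hN⟩
    · rintro ⟨⟨h1, h2⟩, h3⟩
      exact ⟨.of_dotProduct_mulVec_nonneg h1 fun v => by simpa using mem_iInter.mp h2 v,
        fun N hN => mem_iInter₂.mp h3 N hN⟩
  rw [this]
  refine IsClosed.inter (IsClosed.inter ?_ (isClosed_iInter fun v => ?_))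
    (isClosed_iInter fun N => isClosed_iInter fun _ => ?_)
  · exact isClosed_eq (continuous_id.matrix_conjTranspose) continuous_id
  · exact isClosed_le continuous_const
      (continuous_const.dotProduct (continuous_id.matrix_mulVec continuous_const))
  · exact isClosed_le continuous_const ((continuous_const.matrix_mul continuous_id).matrix_trace)

lemma isCompact_convexHull_fd {E : Type*} [NormedAddCommGroup E] [NormedSpace ℝ E]
    [FiniteDimensional ℝ E] {s : Set E} (hs : IsCompact s) :
    IsCompact (convexHull ℝ s) := by
  classical
  rcases s.eq_empty_or_nonempty with rfl | ⟨x₀, hx₀⟩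
  · simp
  set m := Module.finrank ℝ E + 1 with hm
  have key : convexHull ℝ s =
      (fun p : (Fin m → ℝ) × (Fin m → E) => ∑ i, p.1 i • p.2 i) ''
        (stdSimplex ℝ (Fin m) ×ˢ Set.univ.pi fun _ => s) := by
    apply Subset.antisymm
    · intro x hx
      obtain ⟨ι, hι, z, w, hzs, hai, hwpos, hwsum, hwz⟩ :=
        eq_pos_convex_span_of_mem_convexHull hx
      have hcard : Fintype.card ι ≤ m := by
        have h1 := hai.card_le_finrank_succ
        have h2 : Module.finrank ℝ (vectorSpan ℝ (Set.range z)) ≤ Module.finrank ℝ E :=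
          Submodule.finrank_le _
        omega
      obtain ⟨g⟩ : Nonempty (ι ↪ Fin m) :=
        Function.Embedding.nonempty_of_card_le (by simpa using hcard)
      set w' : Fin m → ℝ := fun j => if h : ∃ i, g i = j then w h.choose else 0 with hw'
      set z' : Fin m → E := fun j => if h : ∃ i, g i = j then z h.choose else x₀ with hz'
      have hwg : ∀ i, w' (g i) = w i := by
        intro i
        have h : ∃ i', g i' = g i := ⟨i, rfl⟩
        simp only [hw', dif_pos h]
        rw [g.injective h.choose_spec]
      have hzg : ∀ i, z' (g i) = z i := by
        intro i
        have h : ∃ i', g i' = g i := ⟨i, rfl⟩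
        simp only [hz', dif_pos h]
        rw [g.injective h.choose_spec]
      have hzero : ∀ j ∈ Finset.univ, j ∉ Finset.univ.image g → w' j = 0 := by
        intro j _ hj
        have : ¬ ∃ i, g i = j := by
          rintro ⟨i, rfl⟩; exact hj (Finset.mem_image.mpr ⟨i, Finset.mem_univ i, rfl⟩)
        simp [hw', this]
      have hsum' : ∑ j, w' j = 1 := by
        rw [← Finset.sum_subset (Finset.subset_univ (Finset.univ.image g)) hzero,
          Finset.sum_image (fun a _ b _ h => g.injective h)]
        simp only [hwg]
        exact hwsum
      have hsumz : ∑ j, w' j • z' j = x := by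
        rw [← Finset.sum_subset (Finset.subset_univ (Finset.univ.image g))
            (fun j hj hj2 => by rw [hzero j hj hj2, zero_smul]),
          Finset.sum_image (fun a _ b _ h => g.injective h)]
        simp only [hwg, hzg]
        exact hwz
      refine ⟨(w', z'), ⟨⟨fun j => ?_, hsum'⟩, fun j _ => ?_⟩, hsumz⟩
      · simp only [hw']
        split
        · exact (hwpos _).le
        · exact le_rfl
      · simp only [hz']
        split
        · exact hzs ⟨_, rfl⟩
        · exact hx₀
    · rintro _ ⟨⟨w, z⟩, ⟨⟨hw0, hw1⟩, hz⟩, rfl⟩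
      exact (convex_convexHull ℝ s).sum_mem (fun i _ => hw0 i) hw1
        (fun i _ => subset_convexHull ℝ s (hz i (Set.mem_univ i)))
  rw [key]
  apply IsCompact.image
  · exact (isCompact_stdSimplex _ _).prod (isCompact_univ_pi fun _ => hs)
  · exact continuous_finset_sum _ fun i _ =>
      ((continuous_apply i).comp continuous_fst).smul ((continuous_apply i).comp continuous_snd)

open scoped Pointwise

attribute [local instance] Matrix.normedAddCommGroup Matrix.normedSpace

lemma sum_mulVec'' {ι : Type} (t : Finset ι) (A : ι → Matrix (Fin n) (Fin n) ℝ)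
    (v : Fin n → ℝ) : (∑ i ∈ t, A i) *ᵥ v = ∑ i ∈ t, A i *ᵥ v := by
  funext k
  simp only [Matrix.mulVec, dotProduct, Matrix.sum_apply, Finset.sum_mul, Finset.sum_apply]
  exact Finset.sum_comm

lemma cond_of_rog {𝓜 : Set (Matrix (Fin n) (Fin n) ℝ)} (hROG : IsROG (SCone 𝓜)) :
    ∀ X ∈ SCone 𝓜, X ≠ 0 →
      ∃ x : Fin n → ℝ, x ≠ 0 ∧ (∃ y : Fin n → ℝ, X.mulVec y = x) ∧
        ∀ N ∈ 𝓜, |x ⬝ᵥ N.mulVec x| ≤ (N * X).trace := by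
  intro X hXS hX0
  have hXhull : X ∈ convexHull ℝ (SCone 𝓜 ∩ RankOneSet n) := hROG ▸ hXS
  rw [convexHull_eq] at hXhull
  obtain ⟨ι, t, w, z, hw0, hw1, hzmem, hcm⟩ := hXhull
  rw [Finset.centerMass_eq_of_sum_1 _ _ hw1] at hcm
  -- find a nonzero term
  have h1 : ∃ i ∈ t, w i • z i ≠ 0 := by
    by_contra h
    push_neg at h
    exact hX0 (hcm.symm.trans (Finset.sum_eq_zero h))
  obtain ⟨i₀, hi₀t, hi₀⟩ := h1
  have hwi : 0 < w i₀ := lt_of_le_of_ne (hw0 i₀ hi₀t) (fun heq => hi₀ (by rw [← heq, zero_smul]))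
  obtain ⟨v, hv⟩ := (hzmem i₀ hi₀t).2
  have hzS : ∀ i ∈ t, z i ∈ SCone 𝓜 := fun i hi => (hzmem i hi).1
  have hv0 : v ≠ 0 := by
    rintro rfl
    apply hi₀
    rw [hv]
    ext i j
    simp [vecMulVec_apply]
  refine ⟨Real.sqrt (w i₀) • v, ?_, ?_, ?_⟩
  · exact smul_ne_zero (by positivity) hv0
  · -- range condition
    apply mem_range_of_ker_orth hXS.1.1
    intro zv hzv
    have hq : (0:ℝ) = ∑ i ∈ t, w i * (zv ⬝ᵥ (z i).mulVec zv) := by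
      have : zv ⬝ᵥ X.mulVec zv = 0 := by rw [hzv, dotProduct_zero]
      rw [← this, ← hcm, sum_mulVec'']
      have hdps : zv ⬝ᵥ (∑ i ∈ t, (w i • z i) *ᵥ zv) = ∑ i ∈ t, zv ⬝ᵥ ((w i • z i) *ᵥ zv) := by
        simp only [dotProduct, Finset.sum_apply, Finset.mul_sum]
        exact Finset.sum_comm
      rw [hdps]
      exact Finset.sum_congr rfl fun i _ => by
        rw [smul_mulVec, dotProduct_smul, smul_eq_mul]
    have hterm : ∀ i ∈ t, 0 ≤ w i * (zv ⬝ᵥ (z i).mulVec zv) := fun i hi =>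
      mul_nonneg (hw0 i hi) (by simpa using (hzS i hi).1.dotProduct_mulVec_nonneg zv)
    have hzero := (Finset.sum_eq_zero_iff_of_nonneg hterm).mp hq.symm i₀ hi₀t
    have : zv ⬝ᵥ (z i₀).mulVec zv = 0 := by
      rcases mul_eq_zero.mp hzero with h | h
      · exact absurd h hwi.ne'
      · exact h
    rw [hv, quad_vecMulVec] at this
    have hvz : v ⬝ᵥ zv = 0 := by
      have := sq_eq_zero_iff.mp this
      exact this
    rw [smul_dotProduct, hvz, smul_eq_mul, mul_zero]
  · intro N hN
    have hxNx : (Real.sqrt (w i₀) • v) ⬝ᵥ N.mulVec (Real.sqrt (w i₀) • v)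
        = w i₀ * (v ⬝ᵥ N.mulVec v) := by
      rw [smul_dotProduct, Matrix.mulVec_smul, dotProduct_smul]
      simp only [smul_eq_mul]
      rw [← mul_assoc, Real.mul_self_sqrt (hw0 i₀ hi₀t)]
    have hvNv : 0 ≤ v ⬝ᵥ N.mulVec v := by
      rw [← trace_mul_vecMulVec, ← hv]
      exact (hzS i₀ hi₀t).2 N hN
    have htr : (N * X).trace = ∑ i ∈ t, w i * (N * z i).trace := by
      rw [← hcm, Matrix.mul_sum, trace_sum]
      exact Finset.sum_congr rfl fun i _ => by rw [Matrix.mul_smul, trace_smul, smul_eq_mul]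
    rw [hxNx, abs_of_nonneg (mul_nonneg hwi.le hvNv), htr]
    have : w i₀ * (v ⬝ᵥ N.mulVec v) = w i₀ * (N * z i₀).trace := by
      rw [hv, trace_mul_vecMulVec]
    rw [this]
    exact Finset.single_le_sum (fun i hi => mul_nonneg (hw0 i hi) ((hzS i hi).2 N hN)) hi₀t

lemma dot_single_mulVec (W : Matrix (Fin n) (Fin n) ℝ) (i j : Fin n) :
    Pi.single i 1 ⬝ᵥ W.mulVec (Pi.single j 1) = W i j := by
  simp [dotProduct, Matrix.mulVec, Pi.single_apply]

lemma psd_entry_abs_le {W : Matrix (Fin n) (Fin n) ℝ} (hW : W.PosSemidef) (i j : Fin n) :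
    |W i j| ≤ (W i i + W j j) / 2 := by
  have hsym : W j i = W i j := by
    have := congrFun (congrFun hW.1 i) j
    simpa using this
  have hq : ∀ cc : ℝ, 0 ≤ W i i + 2 * cc * W i j + cc ^ 2 * W j j := by
    intro cc
    have h := hW.dotProduct_mulVec_nonneg ((Pi.single i 1 : Fin n → ℝ) + cc • (Pi.single j 1 : Fin n → ℝ))
    simp only [star_trivial] at h
    rw [Matrix.mulVec_add, Matrix.mulVec_smul, dotProduct_add, add_dotProduct,
      add_dotProduct, dotProduct_smul, smul_dotProduct, smul_dotProduct,
      dotProduct_smul, dot_single_mulVec, dot_single_mulVec, dot_single_mulVec,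
      dot_single_mulVec] at h
    simp only [smul_eq_mul] at h
    rw [hsym] at h; nlinarith [h]
  have h1 := hq 1
  have h2 := hq (-1)
  rw [abs_le]
  constructor <;> nlinarith

lemma extremePoint_rank_one {𝓜 : Set (Matrix (Fin n) (Fin n) ℝ)}
    (hcond : ∀ X ∈ SCone 𝓜, X ≠ 0 →
      ∃ x : Fin n → ℝ, x ≠ 0 ∧ (∃ y : Fin n → ℝ, X.mulVec y = x) ∧
        ∀ N ∈ 𝓜, |x ⬝ᵥ N.mulVec x| ≤ (N * X).trace)
    {Y : Matrix (Fin n) (Fin n) ℝ}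
    (hY : Y ∈ Set.extremePoints ℝ (SCone 𝓜 ∩ {X | X.trace = 1})) :
    Y ∈ SCone 𝓜 ∩ RankOneSet n := by
  obtain ⟨⟨hYS, hYtr⟩, hext⟩ := hY
  have hYtr' : Y.trace = 1 := hYtr
  have hY0 : Y ≠ 0 := by
    rintro rfl
    simp [Matrix.trace] at hYtr'
  obtain ⟨x, hx0, ⟨y, hyx⟩, hE⟩ := hcond Y hYS hY0
  -- c = yᵀ Y y > 0
  set c : ℝ := y ⬝ᵥ Y.mulVec y with hc
  have hc0 : 0 < c := by
    rcases lt_or_eq_of_le (by simpa using hYS.1.dotProduct_mulVec_nonneg y) with h | h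
    · exact h
    · exfalso
      apply hx0
      rw [← hyx]
      rw [← hYS.1.dotProduct_mulVec_zero_iff y]
      simpa using h.symm
  set μ : ℝ := min (1/c) 1 with hμ
  have hμ0 : 0 < μ := lt_min (by positivity) one_pos
  have hμ1 : μ ≤ 1 := min_le_right _ _
  have hμc : μ * c ≤ 1 := by
    calc μ * c ≤ (1/c) * c := by
          apply mul_le_mul_of_nonneg_right (min_le_left _ _) hc0.le
      _ = 1 := by field_simp
  set P : Matrix (Fin n) (Fin n) ℝ := vecMulVec x x with hP
  -- A = Y - μ P ∈ SCone
  have hAq : ∀ z : Fin n → ℝ, 0 ≤ z ⬝ᵥ (Y - μ • P).mulVec z := by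
    intro z
    have h1 : z ⬝ᵥ (Y - μ • P).mulVec z
        = z ⬝ᵥ Y.mulVec z - μ * (x ⬝ᵥ z) ^ 2 := by
      rw [Matrix.sub_mulVec, dotProduct_sub, smul_mulVec, dotProduct_smul,
        smul_eq_mul, hP, quad_vecMulVec]
    have hCS : (x ⬝ᵥ z) ^ 2 ≤ (z ⬝ᵥ Y.mulVec z) * c := by
      have h2 : x ⬝ᵥ z = z ⬝ᵥ Y.mulVec y := by rw [← hyx, dotProduct_comm]
      rw [h2, hc]
      exact psd_cauchy_schwarz hYS.1 z y
    have hzYz : 0 ≤ z ⬝ᵥ Y.mulVec z := by simpa using hYS.1.dotProduct_mulVec_nonneg z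
    rw [h1]
    have : μ * (x ⬝ᵥ z) ^ 2 ≤ μ * ((z ⬝ᵥ Y.mulVec z) * c) :=
      mul_le_mul_of_nonneg_left hCS hμ0.le
    nlinarith
  have hAherm : (Y - μ • P).IsHermitian := by
    have h1 : Pᴴ = P := (posSemidef_vecMulVec x).1
    rw [Matrix.IsHermitian, conjTranspose_sub, conjTranspose_smul, h1, hYS.1.1]
    simp
  have hApsd : (Y - μ • P).PosSemidef := .of_dotProduct_mulVec_nonneg hAherm fun z => by simpa using hAq z
  have htrNP : ∀ N, (N * (μ • P)).trace = μ * (x ⬝ᵥ N.mulVec x) := by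
    intro N
    rw [Matrix.mul_smul, trace_smul, smul_eq_mul, hP, trace_mul_vecMulVec]
  have hAS : Y - μ • P ∈ SCone 𝓜 := by
    refine ⟨hApsd, fun N hN => ?_⟩
    rw [Matrix.mul_sub, trace_sub, htrNP]
    have h3 := hE N hN
    have h4 := hYS.2 N hN
    have h5 : |x ⬝ᵥ N.mulVec x| ≤ (N * Y).trace := h3
    have := abs_le.mp h5
    nlinarith
  have hBS : Y + μ • P ∈ SCone 𝓜 := by
    refine ⟨hYS.1.add (psd_smul (posSemidef_vecMulVec x) hμ0.le), fun N hN => ?_⟩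
    rw [Matrix.mul_add, trace_add, htrNP]
    have := abs_le.mp (hE N hN)
    nlinarith
  -- traces
  set s : ℝ := x ⬝ᵥ x with hs
  have hs0 : 0 < s := by
    rcases (lt_or_eq_of_le (Finset.sum_nonneg fun i _ => mul_self_nonneg (x i) : (0:ℝ) ≤ x ⬝ᵥ x)) with h | h
    · exact h
    · exact absurd (dotProduct_self_eq_zero.mp h.symm) hx0
  have htrP : (μ • P).trace = μ * s := by rw [trace_smul, smul_eq_mul, hP, _root_.trace_vecMulVec]
  have htrA : (Y - μ • P).trace = 1 - μ * s := by rw [trace_sub, hYtr', htrP]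
  have htrB : (Y + μ • P).trace = 1 + μ * s := by rw [trace_add, hYtr', htrP]
  set a : ℝ := 1 - μ * s with ha
  have ha0 : 0 ≤ a := by
    rw [← htrA]; exact psd_trace_nonneg hApsd
  rcases eq_or_lt_of_le ha0 with haz | hap
  · -- a = 0 : A = 0, Y = μ • P
    have hA0 : Y - μ • P = 0 := psd_trace_eq_zero hApsd (by rw [htrA, ← haz])
    have hYP : Y = μ • P := by
      rwa [sub_eq_zero] at hA0
    refine ⟨hYS, ?_⟩
    rw [hYP, hP, smul_vecMulVec μ hμ0.le x]
    exact ⟨_, rfl⟩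
  · -- a > 0
    have hb0 : (0:ℝ) < 1 + μ * s := by nlinarith
    set A₁ := a⁻¹ • (Y - μ • P) with hA₁
    set B₁ := (1 + μ*s)⁻¹ • (Y + μ • P) with hB₁
    have hA₁mem : A₁ ∈ SCone 𝓜 ∩ {X | X.trace = 1} := by
      refine ⟨sCone_smul_mem hAS (inv_nonneg.mpr ha0), ?_⟩
      show (a⁻¹ • (Y - μ • P)).trace = 1
      rw [trace_smul, htrA, smul_eq_mul, inv_mul_cancel₀ hap.ne']
    have hB₁mem : B₁ ∈ SCone 𝓜 ∩ {X | X.trace = 1} := by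
      refine ⟨sCone_smul_mem hBS (inv_nonneg.mpr hb0.le), ?_⟩
      show ((1 + μ*s)⁻¹ • (Y + μ • P)).trace = 1
      rw [trace_smul, htrB, smul_eq_mul, inv_mul_cancel₀ hb0.ne']
    have hseg : Y ∈ openSegment ℝ A₁ B₁ := by
      refine ⟨a/2, (1 + μ*s)/2, by positivity, by positivity, by rw [ha]; ring, ?_⟩
      rw [hA₁, hB₁, smul_smul, smul_smul]
      rw [show a/2 * a⁻¹ = (1:ℝ)/2 by field_simp,
        show (1 + μ*s)/2 * (1 + μ*s)⁻¹ = (1:ℝ)/2 by field_simp]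
      module
    obtain hA₁Y := hext hA₁mem hB₁mem hseg
    -- A = a • Y
    have hAY : Y - μ • P = a • Y := by
      have : a • A₁ = a • Y := by rw [hA₁Y]
      rwa [hA₁, smul_smul, mul_inv_cancel₀ hap.ne', one_smul] at this
    have hμP : (1 - a) • Y = μ • P := by
      rw [sub_smul, one_smul, ← hAY]
      abel
    have h1a : 1 - a = μ * s := by rw [ha]; ring
    have hYP : Y = ((μ*s)⁻¹ * μ) • P := by
      have h2 : (μ*s) • Y = μ • P := by rw [← h1a, hμP]
      have h3 : (μ*s)⁻¹ • ((μ*s) • Y) = (μ*s)⁻¹ • (μ • P) := by rw [h2]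
      rwa [smul_smul, smul_smul, inv_mul_cancel₀ (by positivity : (μ*s) ≠ 0), one_smul] at h3
    refine ⟨hYS, ?_⟩
    rw [hYP, hP, _root_.smul_vecMulVec _ (by positivity) x]
    exact ⟨_, rfl⟩


lemma rog_of_cond {𝓜 : Set (Matrix (Fin n) (Fin n) ℝ)}
    (hcond : ∀ X ∈ SCone 𝓜, X ≠ 0 →
      ∃ x : Fin n → ℝ, x ≠ 0 ∧ (∃ y : Fin n → ℝ, X.mulVec y = x) ∧
        ∀ N ∈ 𝓜, |x ⬝ᵥ N.mulVec x| ≤ (N * X).trace) :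
    IsROG (SCone 𝓜) := by
  apply Set.Subset.antisymm ?_ (convexHull_min inter_subset_left sCone_convex)
  intro X hXS
  by_cases hX0 : X = 0
  · subst hX0
    exact subset_convexHull ℝ _ ⟨hXS, 0, by ext i j; simp [vecMulVec_apply]⟩
  -- the base of the cone
  set B : Set (Matrix (Fin n) (Fin n) ℝ) := SCone 𝓜 ∩ {W | W.trace = 1} with hB
  have hBconvex : Convex ℝ B := by
    apply sCone_convex.inter
    intro W hW V hV p q hp hq hpq
    show (p • W + q • V).trace = 1
    rw [trace_add, trace_smul, trace_smul, show W.trace = 1 from hW,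
      show V.trace = 1 from hV, smul_eq_mul, smul_eq_mul, mul_one, mul_one, hpq]
  have hBclosed : IsClosed B :=
    sCone_isClosed.inter (isClosed_eq (continuous_id.matrix_trace) continuous_const)
  have hBbounded : Bornology.IsBounded B := by
    rw [isBounded_iff_forall_norm_le]
    refine ⟨1, fun W hW => ?_⟩
    rw [Matrix.norm_le_iff zero_le_one]
    intro i j
    rw [Real.norm_eq_abs]
    have hdle : ∀ k, W k k ≤ 1 := by
      intro k
      have h1 : ∑ l, W l l = 1 := hW.2
      rw [← h1]
      exact Finset.single_le_sum (fun l _ => psd_diag_nonneg hW.1.1 l) (Finset.mem_univ k)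
    calc |W i j| ≤ (W i i + W j j) / 2 := psd_entry_abs_le hW.1.1 i j
      _ ≤ 1 := by linarith [hdle i, hdle j]
  have hBcompact : IsCompact B := Metric.isCompact_of_isClosed_isBounded hBclosed hBbounded
  -- the compact generating set of rank-one matrices
  set K : Set (Fin n → ℝ) := {v | vecMulVec v v ∈ SCone 𝓜 ∧ v ⬝ᵥ v = 1} with hKdef
  have hcont : Continuous fun v : Fin n → ℝ => vecMulVec v v :=
    continuous_id.matrix_vecMulVec continuous_id
  have hKclosed : IsClosed K :=
    (sCone_isClosed.preimage hcont).inter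
      (isClosed_eq (continuous_id.dotProduct continuous_id) continuous_const)
  have hKbounded : Bornology.IsBounded K := by
    rw [isBounded_iff_forall_norm_le]
    refine ⟨1, fun v hv => ?_⟩
    rw [pi_norm_le_iff_of_nonneg zero_le_one]
    intro i
    rw [Real.norm_eq_abs, abs_le_one_iff_mul_self_le_one]
    have h1 : ∑ k, v k * v k = 1 := hv.2
    rw [← h1]
    exact Finset.single_le_sum (fun k _ => mul_self_nonneg (v k)) (Finset.mem_univ i)
  have hKcompact : IsCompact K := Metric.isCompact_of_isClosed_isBounded hKclosed hKbounded
  set D : Set (Matrix (Fin n) (Fin n) ℝ) := (fun v : Fin n → ℝ => vecMulVec v v) '' K with hD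
  have hDcompact : IsCompact D := hKcompact.image hcont
  have hDhullcompact : IsCompact (convexHull ℝ D) := isCompact_convexHull_fd hDcompact
  -- extreme points of the base are rank one
  have hextsub : Set.extremePoints ℝ B ⊆ D := by
    intro Y hY
    obtain ⟨hYS, v, hv⟩ := extremePoint_rank_one hcond hY
    have hYB : Y ∈ B := hY.1
    refine ⟨v, ⟨?_, ?_⟩, hv.symm⟩
    · rwa [← hv]
    · have htr1 : Y.trace = 1 := hYB.2
      have h2 : (vecMulVec v v).trace = v ⬝ᵥ v := _root_.trace_vecMulVec v
      rw [← hv, htr1] at h2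
      exact h2.symm
  -- Krein-Milman
  haveI : LocallyConvexSpace ℝ (Matrix (Fin n) (Fin n) ℝ) := NormedSpace.toLocallyConvexSpace
  have hKM : closure (convexHull ℝ (Set.extremePoints ℝ B)) = B :=
    closure_convexHull_extremePoints hBcompact hBconvex
  have hBsub : B ⊆ convexHull ℝ D := by
    intro W hW
    have h1 : W ∈ closure (convexHull ℝ (Set.extremePoints ℝ B)) := by rw [hKM]; exact hW
    have h2 : closure (convexHull ℝ (Set.extremePoints ℝ B))
        ⊆ closure (convexHull ℝ D) := closure_mono (convexHull_mono hextsub)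
    have h3 : closure (convexHull ℝ D) = convexHull ℝ D :=
      hDhullcompact.isClosed.closure_eq
    exact h3 ▸ h2 h1
  -- scale X into the base
  have ht : 0 < X.trace := by
    rcases (psd_trace_nonneg hXS.1).lt_or_eq with h | h
    · exact h
    · exact absurd (psd_trace_eq_zero hXS.1 h.symm) hX0
  set t : ℝ := X.trace with htdef
  have hZB : t⁻¹ • X ∈ B := by
    refine ⟨sCone_smul_mem hXS (inv_nonneg.mpr ht.le), ?_⟩
    show (t⁻¹ • X).trace = 1
    rw [trace_smul, smul_eq_mul, ← htdef, inv_mul_cancel₀ ht.ne']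
  have hDsub : D ⊆ SCone 𝓜 ∩ RankOneSet n := by
    rintro _ ⟨v, ⟨hvS, _⟩, rfl⟩
    exact ⟨hvS, v, rfl⟩
  have hZhull : t⁻¹ • X ∈ convexHull ℝ (SCone 𝓜 ∩ RankOneSet n) :=
    convexHull_mono hDsub (hBsub hZB)
  have hXt : X = t • (t⁻¹ • X) := by
    rw [smul_smul, mul_inv_cancel₀ ht.ne', one_smul]
  have hsmulsub : t • (SCone 𝓜 ∩ RankOneSet n) ⊆ SCone 𝓜 ∩ RankOneSet n := by
    rintro _ ⟨W, ⟨hWS, w, rfl⟩, rfl⟩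
    exact ⟨sCone_smul_mem hWS ht.le, _, smul_vecMulVec t ht.le w⟩
  have : X ∈ t • convexHull ℝ (SCone 𝓜 ∩ RankOneSet n) := ⟨_, hZhull, hXt.symm⟩
  rw [← convexHull_smul] at this
  exact convexHull_mono hsmulsub this


end Helpers

theorem stmt_7 {n : ℕ} (𝓜 : Set (Matrix (Fin n) (Fin n) ℝ)) (h𝓜 : ∀ N ∈ 𝓜, N.IsSymm) :
    IsROG (SCone 𝓜) ↔
      ∀ X ∈ SCone 𝓜, X ≠ 0 →
        ∃ x : Fin n → ℝ, x ≠ 0 ∧ (∃ y : Fin n → ℝ, X.mulVec y = x) ∧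
          ∀ N ∈ 𝓜, |x ⬝ᵥ N.mulVec x| ≤ (N * X).trace :=
  ⟨fun h => cond_of_rog h, fun h => rog_of_cond h⟩
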